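/- Explicit reaction rate of the SRS model for Maxwellian distributions: σ_ij² ∫_{ℝ³}∫_{ℝ³}∫_{𝕊²₊(v_i−v_j)} [(μ_ij/μ_kl)² M_k(v_k°) M_l(v_l°) − M_i(v_i) M_j(v_j)] Θ(c₀⟨ε, v_i − v_j⟩ − Ξ_ij) ⟨ε, v_i − v_j⟩ dε dv_j dv_i = σ_ij² (2πμ_ij/(k_B T))^{1/2} [(μ_ij/μ_kl)^{1/2} c_k c_l exp(Q_R/(k_B T)) − c_i c_j] [(2k_B T/μ_ij) Γ(2, z*) − (Ξ_ij/c₀)² Γ(1, z*)], where z* = (μ_ij/(2k_B T))(Ξ_ij/c₀)². -/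

import Mathlib

open MeasureTheory
open scoped RealInnerProductSpace

noncomputable section

abbrev E3 := EuclideanSpace ℝ (Fin 3)

/-- The surface measure of the unit sphere of `ℝ³`, viewed as a measure on `ℝ³`
(the pushforward along the inclusion of the sphere). -/
def sphMeasure : Measure E3 :=
  Measure.map Subtype.val (volume : Measure E3).toSphere

/-- The Heaviside step function: `1` on `[0, ∞)`, `0` on `(−∞, 0)`. -/
def heav (x : ℝ) : ℝ := if 0 ≤ x then 1 else 0

/-- Product measure `dv ⊗ dw ⊗ dε` on `ℝ³ × ℝ³ × 𝕊²`. -/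
def μ3 : Measure (E3 × E3 × E3) := (volume : Measure E3).prod ((volume : Measure E3).prod sphMeasure)

/-- Product measure `dw ⊗ dε` on `ℝ³ × 𝕊²`. -/
def μ2 : Measure (E3 × E3) := (volume : Measure E3).prod sphMeasure

/-- Reduced mass. -/
def rmass (a b : ℝ) : ℝ := a * b / (a + b)

/-- Elastic post-collisional velocity of the first particle. -/
def vpost (mi ms : ℝ) (vi vs ε : E3) : E3 :=
  vi - (2 * (rmass mi ms / mi) * ⟪ε, vi - vs⟫) • ε

/-- Elastic post-collisional velocity of the second particle. -/
def vpost' (mi ms : ℝ) (vi vs ε : E3) : E3 :=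
  vs + (2 * (rmass mi ms / ms) * ⟪ε, vi - vs⟫) • ε

/-- Reactive post-collisional velocity `v_k°`. -/
def vko (mi mj mk ml Q : ℝ) (vi vj ε : E3) : E3 :=
  (1 / (mi + mj)) • (mi • vi + mj • vj +
    (ml * Real.sqrt (rmass mi mj / rmass mk ml)) •
      ((vi - vj) - ⟪ε, vi - vj⟫ • ε +
        Real.sqrt (⟪ε, vi - vj⟫ ^ 2 - 2 * Q / rmass mi mj) • ε))

/-- Reactive post-collisional velocity `v_l°`. -/
def vlo (mi mj mk ml Q : ℝ) (vi vj ε : E3) : E3 :=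
  (1 / (mi + mj)) • (mi • vi + mj • vj -
    (mk * Real.sqrt (rmass mi mj / rmass mk ml)) •
      ((vi - vj) - ⟪ε, vi - vj⟫ • ε +
        Real.sqrt (⟪ε, vi - vj⟫ ^ 2 - 2 * Q / rmass mi mj) • ε))

/-- Integrand of a (bi- or mono-species) elastic collision operator; it is set to `0` off
the collision hemisphere `⟨ε, v_i − v_s⟩ > 0`, so that integration of this kernel over the
whole sphere coincides with integration over the hemisphere `𝕊²₊(v_i − v_s)`. -/
def elK (σ mi ms : ℝ) (fi fs : E3 → ℝ) (vi vs ε : E3) : ℝ :=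
  if 0 < ⟪ε, vi - vs⟫ then
    σ ^ 2 * (fi (vpost mi ms vi vs ε) * fs (vpost' mi ms vi vs ε) - fi vi * fs vs) *
      ⟪ε, vi - vs⟫
  else 0

/-- Integrand of the correction operator `J_ij^{b*E}` (`0` off the collision hemisphere). -/
def corrK (σ β Ξ mi mj : ℝ) (fi fj : E3 → ℝ) (vi vj ε : E3) : ℝ :=
  if 0 < ⟪ε, vi - vj⟫ then
    β * σ ^ 2 * (fi (vpost mi mj vi vj ε) * fj (vpost' mi mj vi vj ε) - fi vi * fj vj) *
      heav (⟪ε, vi - vj⟫ - Ξ) * ⟪ε, vi - vj⟫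
  else 0

/-- Integrand of the reactive operator `J_i^R` (`0` off the collision hemisphere). -/
def reK (σ β Ξ mi mj mk ml Q : ℝ) (fi fj fk fl : E3 → ℝ) (vi vj ε : E3) : ℝ :=
  if 0 < ⟪ε, vi - vj⟫ then
    β * σ ^ 2 *
      ((rmass mi mj / rmass mk ml) ^ 2 * fk (vko mi mj mk ml Q vi vj ε) *
          fl (vlo mi mj mk ml Q vi vj ε) - fi vi * fj vj) *
      heav (⟪ε, vi - vj⟫ - Ξ) * ⟪ε, vi - vj⟫
  else 0

/-- The collision operator associated with a kernel: integrate over the partner velocity and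
over the sphere. -/
def colOp (K : E3 → E3 → E3 → ℝ) (vi : E3) : ℝ :=
  ∫ vs, ∫ ε, K vi vs ε ∂sphMeasure ∂volume

/-- The upper incomplete gamma function `Γ(η, x) = ∫_x^∞ t^{η−1} e^{−t} dt`. -/
def iGamma (η x : ℝ) : ℝ := ∫ t in Set.Ioi x, t ^ (η - 1) * Real.exp (-t)


-- ================= auxiliary development =================
open Real Set Filter

instance : IsFiniteMeasure sphMeasure := by unfold sphMeasure; infer_instance

private lemma sph_ae_norm : ∀ᵐ ε ∂sphMeasure, ‖ε‖ = 1 := by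
  rw [ae_iff, sphMeasure, MeasureTheory.Measure.map_apply measurable_subtype_coe]
  · convert measure_empty (μ := (volume : Measure E3).toSphere)
    ext ε
    simp only [Set.mem_preimage, Set.mem_setOf_eq, Set.mem_empty_iff_false, iff_false, not_not]
    exact mem_sphere_zero_iff_norm.mp ε.2
  · exact (measurable_norm (measurableSet_singleton (1:ℝ))).compl

private lemma sph_univ_toReal : (sphMeasure Set.univ).toReal = 4 * π := by
  rw [sphMeasure, MeasureTheory.Measure.map_apply measurable_subtype_coe MeasurableSet.univ]
  simp only [Set.preimage_univ, Measure.toSphere_apply_univ, EuclideanSpace.volume_ball,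
    finrank_euclideanSpace, Fintype.card_fin]
  have hΓ : Real.sqrt π ^ 3 / Real.Gamma ((3:ℝ)/2 + 1) = 4/3 * π := by
    rw [Real.Gamma_add_one (by norm_num), show (3:ℝ)/2 = 1/2 + 1 by norm_num,
      Real.Gamma_add_one (by norm_num), Real.Gamma_one_half_eq, pow_succ, sq_sqrt pi_pos.le]
    have hs : Real.sqrt π ≠ 0 := by positivity
    field_simp; ring
  push_cast [hΓ]
  simp only [ENNReal.ofReal_one, one_pow, one_mul, ENNReal.toReal_mul,
    ENNReal.toReal_ofReal (by positivity : (0:ℝ) ≤ 4/3*π)]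
  norm_num
  ring

private def hfun (c0 Ξ x : ℝ) : ℝ := if 0 < x then heav (c0*x - Ξ) * x else 0

private lemma hfun_meas (c0 Ξ : ℝ) : Measurable (hfun c0 Ξ) := by
  unfold hfun heav
  exact Measurable.ite (measurableSet_lt measurable_const measurable_id)
    ((Measurable.ite (measurableSet_le measurable_const
        ((measurable_id.const_mul c0).sub measurable_const))
      measurable_const measurable_const).mul measurable_id) measurable_const

private lemma abs_hfun_le (c0 Ξ x : ℝ) : |hfun c0 Ξ x| ≤ |x| := by
  unfold hfun heav
  split_ifs <;> simp [abs_mul, abs_of_nonneg]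

private lemma hfun_heav_iff {c0 Ξ : ℝ} (hc0 : 0 < c0) (x : ℝ) :
    (0 ≤ c0*x - Ξ) ↔ Ξ/c0 ≤ x := by
  rw [sub_nonneg]; exact (div_le_iff₀' hc0).symm

private lemma J1 {c c0 Ξ : ℝ} (hc : 0 < c) (hc0 : 0 < c0) (hΞ : 0 ≤ Ξ) :
    ∫ x : ℝ, Real.exp (-(c * x^2)) * hfun c0 Ξ x
      = Real.exp (-(c * (Ξ/c0)^2)) / (2*c) := by
  set ξ := Ξ/c0 with hξ
  have hξ0 : 0 ≤ ξ := by positivity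
  have hae : (fun x : ℝ => Real.exp (-(c * x^2)) * hfun c0 Ξ x)
      =ᵐ[volume] (Ioi ξ).indicator (fun x => Real.exp (-(c * x^2)) * x) := by
    have hne : ∀ᵐ x : ℝ ∂volume, x ≠ ξ := by
      rw [ae_iff]; simp only [not_not, Set.setOf_eq_eq_singleton]; exact measure_singleton ξ
    filter_upwards [hne] with x hx
    unfold hfun heav
    rcases lt_trichotomy x ξ with h | h | h
    · rw [indicator_of_notMem (by simp only [mem_Ioi]; exact not_lt.mpr h.le)]
      by_cases h0 : 0 < x
      · rw [if_pos h0, if_neg (fun hcon => absurd ((hfun_heav_iff hc0 x).mp hcon) (not_le.mpr h)),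
          zero_mul, mul_zero]
      · rw [if_neg h0, mul_zero]
    · exact absurd h hx
    · rw [indicator_of_mem (mem_Ioi.mpr h), if_pos (lt_of_le_of_lt hξ0 h),
        if_pos ((hfun_heav_iff hc0 x).mpr h.le), one_mul]
  rw [integral_congr_ae hae, integral_indicator measurableSet_Ioi]
  have hderiv : ∀ x ∈ Ici ξ, HasDerivAt (fun t : ℝ => -Real.exp (-(c * t^2)) / (2*c))
      (Real.exp (-(c * x^2)) * x) x := by
    intro x _
    have h1 : HasDerivAt (fun t : ℝ => -(c * t^2)) (-(c*(2*x))) x := by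
      simpa using ((hasDerivAt_pow 2 x).const_mul c).fun_neg
    have h2 := (h1.exp).fun_neg.div_const (2*c)
    exact h2.congr_deriv (by rw [div_eq_iff (by positivity)]; ring)
  have hint : IntegrableOn (fun x => Real.exp (-(c * x^2)) * x) (Ioi ξ) := by
    apply Integrable.integrableOn
    have h := integrable_mul_exp_neg_mul_sq hc
    apply h.congr
    filter_upwards with x
    rw [neg_mul, mul_comm]
  have htend : Filter.Tendsto (fun t : ℝ => -Real.exp (-(c * t^2)) / (2*c)) Filter.atTop
      (nhds 0) := by
    rw [show (0:ℝ) = -0/(2*c) by simp]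
    apply Filter.Tendsto.div_const
    apply Filter.Tendsto.neg
    apply Real.tendsto_exp_atBot.comp
    apply Filter.tendsto_neg_atTop_atBot.comp
    exact (Filter.tendsto_pow_atTop (two_ne_zero)).const_mul_atTop hc
  rw [integral_Ioi_of_hasDerivAt_of_tendsto' hderiv hint htend]
  field_simp
  ring

private lemma rotate_integral (F : ℝ → ℝ → ℝ) {ε : E3} (hε : ‖ε‖ = 1) :
    ∫ g : E3, F ‖g‖ ⟪ε, g⟫ = ∫ g : E3, F ‖g‖ (g 0) := by
  set e0 : E3 := EuclideanSpace.single (0 : Fin 3) (1:ℝ) with he0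
  have hne0 : ‖ε‖ = ‖e0‖ := by
    rw [hε, he0, EuclideanSpace.norm_single]; norm_num
  set R := Submodule.reflection (ℝ ∙ (ε - e0))ᗮ with hR
  have hRε : R ε = e0 := Submodule.reflection_sub hne0
  have hRe0 : R e0 = ε := by
    have := congrArg R hRε
    rw [hR] at this ⊢; rw [Submodule.reflection_reflection] at this; exact this.symm
  have hmp : MeasurePreserving R volume volume := R.measurePreserving
  rw [← hmp.integral_comp (R.toHomeomorph.measurableEmbedding) _]
  congr 1
  funext g
  have h1 : ‖R g‖ = ‖g‖ := R.norm_map g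
  have h2 : ⟪ε, R g⟫ = g 0 := by
    conv_lhs => rw [← hRe0]
    rw [LinearIsometryEquiv.inner_map_map, he0, EuclideanSpace.inner_single_left]
    simp
  rw [h1, h2]

private lemma apply_symm (y : Fin 3 → ℝ) (i : Fin 3) :
    ((MeasurableEquiv.toLp 2 (Fin 3 → ℝ)) y) i = y i := rfl

private lemma norm_symm (y : Fin 3 → ℝ) :
    ‖(MeasurableEquiv.toLp 2 (Fin 3 → ℝ)) y‖^2 = ∑ i, (y i)^2 := by
  rw [EuclideanSpace.norm_eq, Real.sq_sqrt (by positivity)]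
  simp [Real.norm_eq_abs, sq_abs, apply_symm]

private lemma pi_trans (f : E3 → ℝ) :
    ∫ x : E3, f x = ∫ y : Fin 3 → ℝ, f ((MeasurableEquiv.toLp 2 (Fin 3 → ℝ)) y) := by
  rw [← ((EuclideanSpace.volume_preserving_symm_measurableEquiv_toLp (Fin 3)).symm).integral_comp']
  rfl

private lemma gaussE3_integral {p : ℝ} (hp : 0 < p) :
    ∫ x : E3, Real.exp (-(p * ‖x‖^2)) = Real.sqrt (π/p) ^ 3 := by
  rw [pi_trans]
  have : ∀ y : Fin 3 → ℝ, Real.exp (-(p * ‖(MeasurableEquiv.toLp 2 (Fin 3 → ℝ)) y‖^2))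
      = ∏ i, Real.exp (-(p * (y i)^2)) := by
    intro y
    rw [norm_symm, ← Real.exp_sum]
    congr 1
    rw [Finset.mul_sum]
    simp [Finset.sum_neg_distrib]
  simp_rw [this]
  rw [MeasureTheory.volume_pi, integral_fintype_prod_eq_pow (ι := Fin 3) (fun t : ℝ => Real.exp (-(p * t^2)))]
  simp only [Fintype.card_fin]
  congr 1
  simpa using integral_gaussian p

private lemma gaussE3_integrable {p : ℝ} (hp : 0 < p) :
    Integrable (fun x : E3 => Real.exp (-(p * ‖x‖^2))) := by
  rw [← MeasurePreserving.integrable_comp_emb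
    ((EuclideanSpace.volume_preserving_symm_measurableEquiv_toLp (Fin 3)).symm)
    (MeasurableEquiv.toLp 2 (Fin 3 → ℝ)).measurableEmbedding]
  have : (fun x : E3 => Real.exp (-(p * ‖x‖^2))) ∘ (MeasurableEquiv.toLp 2 (Fin 3 → ℝ))
      = fun y : Fin 3 → ℝ => ∏ i, Real.exp (-(p * (y i)^2)) := by
    funext y
    simp only [Function.comp_apply]
    rw [norm_symm, ← Real.exp_sum]
    congr 1
    rw [Finset.mul_sum]
    simp [Finset.sum_neg_distrib]
  rw [MeasurableEquiv.symm_symm, this]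
  exact Integrable.fintype_prod (𝕜 := ℝ) (f := fun _ : Fin 3 => fun t : ℝ => Real.exp (-(p*t^2)))
    (fun _ => by simpa using integrable_exp_neg_mul_sq hp)

private lemma gauss_hfun_E3 {c c0 Ξ : ℝ} (hc : 0 < c) (hc0 : 0 < c0) (hΞ : 0 ≤ Ξ)
    {ε : E3} (hε : ‖ε‖ = 1) :
    ∫ g : E3, Real.exp (-(c*‖g‖^2)) * hfun c0 Ξ ⟪ε, g⟫
      = (π/c) * (Real.exp (-(c*(Ξ/c0)^2)) / (2*c)) := by
  have hrot := rotate_integral (fun r x => Real.exp (-(c*r^2)) * hfun c0 Ξ x) hε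
  simp only at hrot
  rw [hrot, pi_trans]
  set f : Fin 3 → ℝ → ℝ := fun i t =>
    if i = (0 : Fin 3) then Real.exp (-(c*t^2)) * hfun c0 Ξ t else Real.exp (-(c*t^2)) with hf
  have key : ∀ y : Fin 3 → ℝ,
      Real.exp (-(c*‖(MeasurableEquiv.toLp 2 (Fin 3 → ℝ)) y‖^2)) *
        hfun c0 Ξ (((MeasurableEquiv.toLp 2 (Fin 3 → ℝ)) y) 0)
      = ∏ i, f i (y i) := by
    intro y
    rw [norm_symm, apply_symm, Fin.prod_univ_three, hf]
    simp only [reduceIte, Fin.sum_univ_three]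
    rw [if_neg (by decide : ¬(1:Fin 3) = 0), if_neg (by decide : ¬(2:Fin 3) = 0)]
    rw [mul_comm (rexp (-(c * y 0 ^ 2))) (hfun c0 Ξ (y 0)), mul_assoc, mul_assoc,
      ← Real.exp_add, ← Real.exp_add, mul_comm (hfun c0 Ξ (y 0))]
    ring_nf
  rw [show (∫ y : Fin 3 → ℝ, Real.exp (-(c*‖(MeasurableEquiv.toLp 2 (Fin 3 → ℝ)) y‖^2)) *
        hfun c0 Ξ (((MeasurableEquiv.toLp 2 (Fin 3 → ℝ)) y) 0))
      = ∫ y : Fin 3 → ℝ, ∏ i, f i (y i) from by congr 1; funext y; exact key y]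
  rw [MeasureTheory.volume_pi, MeasureTheory.integral_fintype_prod_eq_prod (ι := Fin 3) f, Fin.prod_univ_three, hf]
  simp only [reduceIte, if_neg (by decide : ¬(1:Fin 3) = 0), if_neg (by decide : ¬(2:Fin 3) = 0)]
  rw [J1 hc hc0 hΞ]
  have hg : ∫ x : ℝ, Real.exp (-(c*x^2)) = Real.sqrt (π/c) := by
    simpa [neg_mul] using integral_gaussian c
  rw [hg, mul_assoc, Real.mul_self_sqrt (le_of_lt (div_pos pi_pos hc))]
  ring

private lemma gaussE3_norm_integrable {p : ℝ} (hp : 0 < p) :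
    Integrable (fun x : E3 => ‖x‖ * Real.exp (-(p * ‖x‖^2))) := by
  have hhalf : 0 < p/2 := by positivity
  have hm : 0 < min 1 (p/2) := by positivity
  set K : ℝ := 1 / min 1 (p/2) with hK
  apply Integrable.mono' ((gaussE3_integrable hhalf).const_mul K)
  · exact (continuous_norm.mul (Real.continuous_exp.comp
      ((continuous_const.mul (continuous_norm.pow 2)).neg))).aestronglyMeasurable
  · filter_upwards with x
    rw [Real.norm_eq_abs, abs_mul, abs_of_nonneg (norm_nonneg x),
      abs_of_nonneg (Real.exp_pos _).le]
    have key : min 1 (p/2) * ‖x‖ ≤ Real.exp ((p/2)*‖x‖^2) := by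
      have hexp := Real.add_one_le_exp ((p/2)*‖x‖^2)
      rcases le_total ‖x‖ 1 with h | h
      · nlinarith [norm_nonneg x, min_le_left 1 (p/2), mul_nonneg hhalf.le (sq_nonneg ‖x‖)]
      · nlinarith [mul_le_mul_of_nonneg_right (min_le_right 1 (p/2)) (norm_nonneg x),
          mul_nonneg (mul_nonneg hhalf.le (norm_nonneg x)) (sub_nonneg.mpr h)]
    have h1 : ‖x‖ ≤ K * Real.exp ((p/2) * ‖x‖^2) := by
      rw [hK, one_div_mul_eq_div, le_div_iff₀' hm]
      exact key
    calc ‖x‖ * Real.exp (-(p*‖x‖^2))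
        ≤ (K * Real.exp ((p/2)*‖x‖^2)) * Real.exp (-(p*‖x‖^2)) :=
          mul_le_mul_of_nonneg_right h1 (Real.exp_pos _).le
      _ = K * Real.exp (-(p/2*‖x‖^2)) := by
          rw [mul_assoc, ← Real.exp_add]; ring_nf

private lemma Sfun_stronglyMeasurable (c0 Ξ : ℝ) :
    StronglyMeasurable (fun g : E3 => ∫ ε, hfun c0 Ξ ⟪ε, g⟫ ∂sphMeasure) := by
  apply MeasureTheory.StronglyMeasurable.integral_prod_right'
    (f := fun p : E3 × E3 => hfun c0 Ξ ⟪p.2, p.1⟫)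
  apply Measurable.stronglyMeasurable
  exact (hfun_meas c0 Ξ).comp
    ((continuous_inner (𝕜 := ℝ) (E := E3)).comp
      (continuous_snd.prodMk continuous_fst)).measurable

private lemma Sfun_bound (c0 Ξ : ℝ) (g : E3) :
    |∫ ε, hfun c0 Ξ ⟪ε, g⟫ ∂sphMeasure| ≤ (sphMeasure Set.univ).toReal * ‖g‖ := by
  have h := norm_integral_le_of_norm_le (μ := sphMeasure)
    (f := fun ε => hfun c0 Ξ ⟪ε, g⟫) (g := fun _ => ‖g‖)
    (integrable_const ‖g‖) ?_
  · rw [integral_const, smul_eq_mul] at h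
    exact h
  · filter_upwards [sph_ae_norm] with ε hε
    rw [Real.norm_eq_abs]
    calc |hfun c0 Ξ ⟪ε, g⟫| ≤ |⟪ε, g⟫| := abs_hfun_le _ _ _
      _ ≤ ‖ε‖ * ‖g‖ := abs_real_inner_le_norm ε g
      _ = ‖g‖ := by rw [hε, one_mul]

private lemma complete_square {a b : ℝ} (ha : 0 < a) (hb : 0 < b) (u g : E3) :
    a*‖u + (b/(a+b))•g‖^2 + b*‖u + (b/(a+b))•g - g‖^2
      = (a+b)*‖u‖^2 + (a*b/(a+b))*‖g‖^2 := by
  have hab : (0:ℝ) < a + b := by linarith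
  have h1 : u + (b/(a+b))•g - g = u - (a/(a+b))•g := by
    have hc : b/(a+b) - 1 = -(a/(a+b)) := by field_simp; ring
    calc u + (b/(a+b))•g - g = u + ((b/(a+b) - 1)•g) := by
          rw [sub_smul, one_smul, add_sub_assoc]
      _ = u - (a/(a+b))•g := by rw [hc, neg_smul, ← sub_eq_add_neg]
  rw [h1, norm_add_sq_real, norm_sub_sq_real, real_inner_smul_right, real_inner_smul_right,
    norm_smul, norm_smul]
  simp only [Real.norm_eq_abs, mul_pow, sq_abs, abs_div]
  rw [abs_of_pos ha, abs_of_pos hb, abs_of_pos hab]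
  field_simp
  ring

private lemma gauss_conv {a b : ℝ} (ha : 0 < a) (hb : 0 < b) (g : E3) :
    ∫ vi : E3, Real.exp (-(a*‖vi‖^2)) * Real.exp (-(b*‖vi - g‖^2))
      = Real.exp (-((a*b/(a+b))*‖g‖^2)) * Real.sqrt (π/(a+b)) ^ 3 := by
  have hab : (0:ℝ) < a + b := by linarith
  rw [← integral_add_right_eq_self
    (fun u : E3 => Real.exp (-(a*‖u‖^2)) * Real.exp (-(b*‖u - g‖^2))) ((b/(a+b))•g)]
  have : ∀ u : E3, Real.exp (-(a*‖u + (b/(a+b))•g‖^2)) * Real.exp (-(b*‖u + (b/(a+b))•g - g‖^2))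
      = Real.exp (-((a+b)*‖u‖^2)) * Real.exp (-((a*b/(a+b))*‖g‖^2)) := by
    intro u
    rw [← Real.exp_add, ← Real.exp_add]
    congr 1
    have := complete_square ha hb u g
    linarith
  simp only [this]
  rw [MeasureTheory.integral_mul_const, gaussE3_integral hab]
  ring

private lemma tau_mp : MeasurePreserving (fun z : E3 × E3 => (z.1, z.1 - z.2))
    ((volume : Measure E3).prod volume) ((volume : Measure E3).prod volume) := by
  have h1 : MeasurePreserving (fun z : E3 × E3 => (z.1, -z.2))
      ((volume : Measure E3).prod volume) ((volume : Measure E3).prod volume) :=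
    (MeasurePreserving.id volume).prod (Measure.measurePreserving_neg volume)
  have h2 : MeasurePreserving (fun z : E3 × E3 => (z.1, z.1 + z.2))
      ((volume : Measure E3).prod volume) ((volume : Measure E3).prod volume) :=
    measurePreserving_prod_add volume volume
  have heq : (fun z : E3 × E3 => (z.1, z.1 - z.2))
      = (fun z : E3 × E3 => (z.1, z.1 + z.2)) ∘ (fun z : E3 × E3 => (z.1, -z.2)) := by
    funext z; simp [sub_eq_add_neg]
  rw [heq]; exact h2.comp h1

private lemma integrable_Psi {a b : ℝ} (ha : 0 < a) (hb : 0 < b) (c0 Ξ : ℝ) :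
    Integrable (fun p : E3 × E3 => Real.exp (-(a*‖p.1‖^2)) * Real.exp (-(b*‖p.2‖^2)) *
      (∫ ε, hfun c0 Ξ ⟪ε, p.1 - p.2⟫ ∂sphMeasure)) ((volume : Measure E3).prod volume) := by
  set Cs : ℝ := (sphMeasure Set.univ).toReal with hCs
  have hCs0 : 0 ≤ Cs := ENNReal.toReal_nonneg
  have hbd : Integrable (fun p : E3 × E3 =>
      Cs * ((‖p.1‖ * Real.exp (-(a*‖p.1‖^2))) * Real.exp (-(b*‖p.2‖^2)))
      + Cs * (Real.exp (-(a*‖p.1‖^2)) * (‖p.2‖ * Real.exp (-(b*‖p.2‖^2)))))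
      ((volume : Measure E3).prod volume) :=
    (((gaussE3_norm_integrable ha).mul_prod (gaussE3_integrable hb)).const_mul Cs).add
      (((gaussE3_integrable ha).mul_prod (gaussE3_norm_integrable hb)).const_mul Cs)
  apply Integrable.mono' hbd
  · apply Measurable.aestronglyMeasurable
    apply Measurable.mul
    · exact ((Real.continuous_exp.comp ((continuous_const.mul
        ((continuous_norm.comp continuous_fst).pow 2)).neg)).mul
        (Real.continuous_exp.comp ((continuous_const.mul
        ((continuous_norm.comp continuous_snd).pow 2)).neg))).measurable
    · exact (Sfun_stronglyMeasurable c0 Ξ).measurable.comp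
        (continuous_fst.sub continuous_snd).measurable
  · filter_upwards with p
    rw [Real.norm_eq_abs, abs_mul, abs_mul, abs_of_nonneg (Real.exp_pos _).le,
      abs_of_nonneg (Real.exp_pos _).le]
    calc Real.exp (-(a*‖p.1‖^2)) * Real.exp (-(b*‖p.2‖^2)) *
          |∫ ε, hfun c0 Ξ ⟪ε, p.1 - p.2⟫ ∂sphMeasure|
        ≤ Real.exp (-(a*‖p.1‖^2)) * Real.exp (-(b*‖p.2‖^2)) * (Cs * ‖p.1 - p.2‖) := by
          apply mul_le_mul_of_nonneg_left (Sfun_bound c0 Ξ _)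
          positivity
      _ ≤ Real.exp (-(a*‖p.1‖^2)) * Real.exp (-(b*‖p.2‖^2)) * (Cs * (‖p.1‖ + ‖p.2‖)) := by
          apply mul_le_mul_of_nonneg_left _ (by positivity)
          exact mul_le_mul_of_nonneg_left (norm_sub_le _ _) hCs0
      _ = Cs * ((‖p.1‖ * Real.exp (-(a*‖p.1‖^2))) * Real.exp (-(b*‖p.2‖^2)))
          + Cs * (Real.exp (-(a*‖p.1‖^2)) * (‖p.2‖ * Real.exp (-(b*‖p.2‖^2)))) := by ring

private lemma integrable_Phi {a b : ℝ} (ha : 0 < a) (hb : 0 < b) (c0 Ξ : ℝ) :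
    Integrable (fun p : E3 × E3 => Real.exp (-(a*‖p.1‖^2)) * Real.exp (-(b*‖p.1 - p.2‖^2)) *
      (∫ ε, hfun c0 Ξ ⟪ε, p.2⟫ ∂sphMeasure)) ((volume : Measure E3).prod volume) := by
  have hΨ := integrable_Psi ha hb c0 Ξ
  have haesm := hΨ.aestronglyMeasurable
  have hcomp := (tau_mp.integrable_comp haesm).mpr hΨ
  apply hcomp.congr
  filter_upwards with p
  simp only [Function.comp_apply, sub_sub_cancel]

private lemma integrable2 {c : ℝ} (hc : 0 < c) (c0 Ξ : ℝ) :
    Integrable (fun q : E3 × E3 => Real.exp (-(c*‖q.1‖^2)) * hfun c0 Ξ ⟪q.2, q.1⟫)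
      ((volume : Measure E3).prod sphMeasure) := by
  have hbd : Integrable (fun q : E3 × E3 => (‖q.1‖ * Real.exp (-(c*‖q.1‖^2))) * 1)
      ((volume : Measure E3).prod sphMeasure) :=
    (gaussE3_norm_integrable hc).mul_prod (integrable_const 1)
  have hae : ∀ᵐ q : E3 × E3 ∂((volume : Measure E3).prod sphMeasure), ‖q.2‖ = 1 := by
    rw [ae_iff]
    have hset : {q : E3 × E3 | ¬ ‖q.2‖ = 1} = Set.univ ×ˢ {ε : E3 | ¬ ‖ε‖ = 1} := by
      ext q; simp
    rw [hset, Measure.prod_prod, ae_iff.mp sph_ae_norm, mul_zero]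
  apply Integrable.mono' hbd
  · apply Measurable.aestronglyMeasurable
    exact ((Real.continuous_exp.comp ((continuous_const.mul
        ((continuous_norm.comp continuous_fst).pow 2)).neg)).measurable).mul
      ((hfun_meas c0 Ξ).comp ((continuous_inner (𝕜 := ℝ) (E := E3)).comp
        (continuous_snd.prodMk continuous_fst)).measurable)
  · filter_upwards [hae] with q hq
    rw [Real.norm_eq_abs, abs_mul, abs_of_nonneg (Real.exp_pos _).le, mul_one]
    calc Real.exp (-(c*‖q.1‖^2)) * |hfun c0 Ξ ⟪q.2, q.1⟫|
        ≤ Real.exp (-(c*‖q.1‖^2)) * |⟪q.2, q.1⟫| :=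
          mul_le_mul_of_nonneg_left (abs_hfun_le _ _ _) (Real.exp_pos _).le
      _ ≤ Real.exp (-(c*‖q.1‖^2)) * ‖q.1‖ := by
          apply mul_le_mul_of_nonneg_left _ (Real.exp_pos _).le
          calc |⟪q.2, q.1⟫| ≤ ‖q.2‖ * ‖q.1‖ := abs_real_inner_le_norm _ _
            _ = ‖q.1‖ := by rw [hq, one_mul]
      _ = ‖q.1‖ * Real.exp (-(c*‖q.1‖^2)) := mul_comm _ _

private lemma core {a b c0 Ξ : ℝ} (ha : 0 < a) (hb : 0 < b) (hc0 : 0 < c0) (hΞ : 0 ≤ Ξ) :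
    ∫ vi : E3, ∫ vj : E3, Real.exp (-(a*‖vi‖^2)) * Real.exp (-(b*‖vj‖^2)) *
        (∫ ε, hfun c0 Ξ ⟪ε, vi - vj⟫ ∂sphMeasure) ∂volume ∂volume
    = Real.sqrt (π/(a+b))^3 * ((sphMeasure Set.univ).toReal *
        ((π/(a*b/(a+b))) * (Real.exp (-((a*b/(a+b))*(Ξ/c0)^2)) / (2*(a*b/(a+b)))))) := by
  have hab : (0:ℝ) < a+b := by linarith
  set c : ℝ := a*b/(a+b) with hcdef
  have hc : 0 < c := by positivity
  set S : E3 → ℝ := fun g => ∫ ε, hfun c0 Ξ ⟪ε, g⟫ ∂sphMeasure with hS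
  have h1 : ∀ vi : E3,
      (∫ vj : E3, Real.exp (-(a*‖vi‖^2)) * Real.exp (-(b*‖vj‖^2)) * S (vi - vj))
      = ∫ g : E3, Real.exp (-(a*‖vi‖^2)) * Real.exp (-(b*‖vi - g‖^2)) * S g := by
    intro vi
    rw [← integral_sub_left_eq_self
      (fun g : E3 => Real.exp (-(a*‖vi‖^2)) * Real.exp (-(b*‖vi - g‖^2)) * S g) volume vi]
    congr 1; funext vj
    simp [sub_sub_cancel]
  calc ∫ vi : E3, ∫ vj : E3, Real.exp (-(a*‖vi‖^2)) * Real.exp (-(b*‖vj‖^2)) * S (vi - vj)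
      = ∫ vi : E3, ∫ g : E3, Real.exp (-(a*‖vi‖^2)) * Real.exp (-(b*‖vi - g‖^2)) * S g := by
        congr 1; funext vi; exact h1 vi
    _ = ∫ g : E3, ∫ vi : E3, Real.exp (-(a*‖vi‖^2)) * Real.exp (-(b*‖vi - g‖^2)) * S g := by
        apply MeasureTheory.integral_integral_swap
        exact integrable_Phi ha hb c0 Ξ
    _ = ∫ g : E3, S g * (Real.exp (-(c*‖g‖^2)) * Real.sqrt (π/(a+b))^3) := by
        congr 1; funext g
        rw [show (fun vi : E3 => Real.exp (-(a*‖vi‖^2)) * Real.exp (-(b*‖vi - g‖^2)) * S g)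
          = fun vi : E3 => S g * (Real.exp (-(a*‖vi‖^2)) * Real.exp (-(b*‖vi - g‖^2)))
          from funext fun vi => by ring]
        rw [MeasureTheory.integral_const_mul, gauss_conv ha hb g]
    _ = Real.sqrt (π/(a+b))^3 * ∫ g : E3, Real.exp (-(c*‖g‖^2)) * S g := by
        rw [show (fun g : E3 => S g * (Real.exp (-(c*‖g‖^2)) * Real.sqrt (π/(a+b))^3))
          = fun g : E3 => Real.sqrt (π/(a+b))^3 * (Real.exp (-(c*‖g‖^2)) * S g)
          from funext fun g => by ring]
        rw [MeasureTheory.integral_const_mul]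
    _ = Real.sqrt (π/(a+b))^3 * ((sphMeasure Set.univ).toReal *
        ((π/c) * (Real.exp (-(c*(Ξ/c0)^2)) / (2*c)))) := by
        congr 1
        have hpull : (fun g : E3 => Real.exp (-(c*‖g‖^2)) * S g)
            = fun g : E3 => ∫ ε, Real.exp (-(c*‖g‖^2)) * hfun c0 Ξ ⟪ε, g⟫ ∂sphMeasure := by
          funext g
          rw [MeasureTheory.integral_const_mul]
        rw [hpull]
        rw [MeasureTheory.integral_integral_swap (integrable2 hc c0 Ξ)]
        have hae : (fun ε : E3 => ∫ g : E3, Real.exp (-(c*‖g‖^2)) * hfun c0 Ξ ⟪ε, g⟫)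
            =ᵐ[sphMeasure] fun _ => (π/c) * (Real.exp (-(c*(Ξ/c0)^2)) / (2*c)) := by
          filter_upwards [sph_ae_norm] with ε hε
          exact gauss_hfun_E3 hc hc0 hΞ hε
        rw [integral_congr_ae hae, integral_const, smul_eq_mul]
        rfl

private lemma energy_identity (mi mj mk ml Q : ℝ) (hmi : 0 < mi) (hmj : 0 < mj)
    (hmk : 0 < mk) (hml : 0 < ml) (hM : mi + mj = mk + ml)
    (vi vj ε : E3) (hε : ‖ε‖ = 1)
    (hx : 2 * Q / rmass mi mj ≤ ⟪ε, vi - vj⟫ ^ 2) :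
    mk * ‖vko mi mj mk ml Q vi vj ε‖ ^ 2 + ml * ‖vlo mi mj mk ml Q vi vj ε‖ ^ 2
      = mi * ‖vi‖ ^ 2 + mj * ‖vj‖ ^ 2 - 2 * Q := by
  have hM0 : (0:ℝ) < mi + mj := by linarith
  have hμ : 0 < rmass mi mj := div_pos (mul_pos hmi hmj) hM0
  have hμkl : 0 < rmass mk ml := div_pos (mul_pos hmk hml) (by linarith)
  set x := ⟪ε, vi - vj⟫ with hxdef
  set ω := Real.sqrt (x ^ 2 - 2 * Q / rmass mi mj) with hω
  set s := Real.sqrt (rmass mi mj / rmass mk ml) with hs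
  set P : E3 := mi • vi + mj • vj with hP
  set w : E3 := (vi - vj) - x • ε + ω • ε with hw
  have hs2 : s ^ 2 = rmass mi mj / rmass mk ml := Real.sq_sqrt (by positivity)
  have hω2 : ω ^ 2 = x ^ 2 - 2 * Q / rmass mi mj := Real.sq_sqrt (by linarith)
  have hεsq : ⟪ε, ε⟫ = 1 := by
    rw [real_inner_self_eq_norm_sq, hε]; norm_num
  have hinner_w_self : ‖w‖ ^ 2 = ‖vi - vj‖ ^ 2 - 2 * Q / rmass mi mj := by
    have h1 : ⟪(vi - vj) - x • ε, ε⟫ = 0 := by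
      rw [inner_sub_left, real_inner_smul_left, hεsq, real_inner_comm]
      simp [hxdef]
    have : ‖w‖ ^ 2 = ‖(vi - vj) - x • ε‖ ^ 2 + 2 * ⟪(vi - vj) - x • ε, ω • ε⟫ + ‖ω • ε‖ ^ 2 := by
      rw [hw, norm_add_sq_real]
    rw [this, real_inner_smul_right, h1, norm_smul, norm_sub_sq_real, real_inner_smul_right,
      norm_smul, hε, real_inner_comm]
    simp only [mul_zero, add_zero, Real.norm_eq_abs, mul_one, sq_abs]
    rw [hω2, ← hxdef]
    ring
  have habs : ‖(1:ℝ)/(mi+mj)‖^2 = (1/(mi+mj))^2 := by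
    rw [Real.norm_eq_abs, sq_abs]
  have hko : ‖vko mi mj mk ml Q vi vj ε‖ ^ 2
      = (1/(mi+mj))^2 * (‖P‖^2 + 2 * (ml * s) * ⟪P, w⟫ + (ml*s)^2 * ‖w‖^2) := by
    rw [vko, norm_smul, mul_pow, habs, ← hP, ← hxdef, ← hω, ← hs, ← hw]
    congr 1
    rw [norm_add_sq_real, real_inner_smul_right, norm_smul]
    simp only [Real.norm_eq_abs, mul_pow, sq_abs]
    ring
  have hlo : ‖vlo mi mj mk ml Q vi vj ε‖ ^ 2
      = (1/(mi+mj))^2 * (‖P‖^2 - 2 * (mk * s) * ⟪P, w⟫ + (mk*s)^2 * ‖w‖^2) := by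
    rw [vlo, norm_smul, mul_pow, habs, ← hP, ← hxdef, ← hω, ← hs, ← hw]
    congr 1
    rw [norm_sub_sq_real, real_inner_smul_right, norm_smul]
    simp only [Real.norm_eq_abs, mul_pow, sq_abs]
    ring
  have hP2 : ‖P‖^2 = mi^2 * ‖vi‖^2 + 2*mi*mj*⟪vi, vj⟫ + mj^2 * ‖vj‖^2 := by
    rw [hP, norm_add_sq_real, real_inner_smul_left, real_inner_smul_right, norm_smul, norm_smul]
    simp only [Real.norm_eq_abs, mul_pow, sq_abs]
    ring
  have hg2 : ‖vi - vj‖^2 = ‖vi‖^2 - 2*⟪vi, vj⟫ + ‖vj‖^2 := by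
    rw [norm_sub_sq_real]
  have step : mk * ‖vko mi mj mk ml Q vi vj ε‖^2 + ml * ‖vlo mi mj mk ml Q vi vj ε‖^2
      = (1/(mi+mj)) * ‖P‖^2 + rmass mi mj * ‖w‖^2 := by
    have h1 : (ml*s)^2 = ml^2 * (rmass mi mj / rmass mk ml) := by rw [mul_pow, hs2]
    have h2 : (mk*s)^2 = mk^2 * (rmass mi mj / rmass mk ml) := by rw [mul_pow, hs2]
    rw [hko, hlo, h1, h2]
    simp only [rmass]
    rw [← hM]
    field_simp
    linear_combination (-(‖P‖^2+mi*mj*‖w‖^2)) * hM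
  rw [step, hinner_w_self, hP2, hg2]
  simp only [rmass]
  field_simp
  ring

private lemma rpow32_mul {p q C : ℝ} (hp : 0 ≤ p) (hq : 0 ≤ q) (hC : 0 < C) :
    (p/C) ^ ((3:ℝ)/2) * (q/C) ^ ((3:ℝ)/2) = (p*q/(C*C)) ^ ((3:ℝ)/2) := by
  rw [← Real.mul_rpow (by positivity) (by positivity), div_mul_div_comm]

private lemma rpow_ratio {r : ℝ} (hr : 0 < r) (V : ℝ) (hV : 0 < V) :
    r^2 * V^((3:ℝ)/2) = Real.sqrt r * (r*V)^((3:ℝ)/2) := by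
  rw [Real.mul_rpow hr.le hV.le, Real.sqrt_eq_rpow, ← mul_assoc, ← Real.rpow_add hr,
    show ((1:ℝ)/2 + 3/2) = 2 by norm_num, Real.rpow_two, sq]

private lemma kernel_rewrite
    (mi mj mk ml : ℝ) (hmi : 0 < mi) (hmj : 0 < mj) (hmk : 0 < mk) (hml : 0 < ml)
    (hM : mi + mj = mk + ml)
    (QR σij T kB c0 Ξij : ℝ) (hT : 0 < T) (hkB : 0 < kB) (hc0 : 0 < c0)
    (hΞ : 0 ≤ Ξij) (hthr : 2 * QR ≤ rmass mi mj * (Ξij / c0) ^ 2)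
    (ci cj ck cl : ℝ)
    (Mi Mj Mk Ml : E3 → ℝ)
    (hMi : Mi = fun v => ci * (mi / (2 * Real.pi * kB * T)) ^ ((3 : ℝ) / 2) *
      Real.exp (-(mi * ‖v‖ ^ 2) / (2 * kB * T)))
    (hMj : Mj = fun v => cj * (mj / (2 * Real.pi * kB * T)) ^ ((3 : ℝ) / 2) *
      Real.exp (-(mj * ‖v‖ ^ 2) / (2 * kB * T)))
    (hMk : Mk = fun v => ck * (mk / (2 * Real.pi * kB * T)) ^ ((3 : ℝ) / 2) *
      Real.exp (-(mk * ‖v‖ ^ 2) / (2 * kB * T)))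
    (hMl : Ml = fun v => cl * (ml / (2 * Real.pi * kB * T)) ^ ((3 : ℝ) / 2) *
      Real.exp (-(ml * ‖v‖ ^ 2) / (2 * kB * T)))
    (vi vj ε : E3) (hε : ‖ε‖ = 1) :
    (if 0 < ⟪ε, vi - vj⟫ then
        σij ^ 2 *
          ((rmass mi mj / rmass mk ml) ^ 2 * Mk (vko mi mj mk ml QR vi vj ε) *
              Ml (vlo mi mj mk ml QR vi vj ε) - Mi vi * Mj vj) *
          heav (c0 * ⟪ε, vi - vj⟫ - Ξij) * ⟪ε, vi - vj⟫
      else 0)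
    = (σij^2 * (Real.sqrt (rmass mi mj / rmass mk ml) * (ck*cl) * Real.exp (QR/(kB*T)) - ci*cj)
        * ((mi/(2*π*kB*T)) ^ ((3:ℝ)/2) * (mj/(2*π*kB*T)) ^ ((3:ℝ)/2)))
      * (Real.exp (-((mi/(2*kB*T))*‖vi‖^2)) * Real.exp (-((mj/(2*kB*T))*‖vj‖^2)) *
          hfun c0 Ξij ⟪ε, vi - vj⟫) := by
  have hM0 : (0:ℝ) < mi + mj := by linarith
  have hμ : 0 < rmass mi mj := div_pos (mul_pos hmi hmj) hM0
  have hμkl : 0 < rmass mk ml := div_pos (mul_pos hmk hml) (by rw [← hM]; exact hM0)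
  set x := ⟪ε, vi - vj⟫ with hxdef
  unfold hfun
  by_cases hx : 0 < x
  · rw [if_pos hx, if_pos hx]
    by_cases hh : 0 ≤ c0 * x - Ξij
    · have hheav : heav (c0 * x - Ξij) = 1 := if_pos hh
      rw [hheav]
      have hxξ : Ξij/c0 ≤ x := (hfun_heav_iff hc0 x).mp hh
      have hξ0 : 0 ≤ Ξij/c0 := by positivity
      have hsq : (Ξij/c0)^2 ≤ x^2 := by nlinarith
      have hen : 2 * QR / rmass mi mj ≤ x ^ 2 := by
        rw [div_le_iff₀ hμ] at *
        nlinarith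
      have hE := energy_identity mi mj mk ml QR hmi hmj hmk hml hM vi vj ε hε hen
      have hexp : Real.exp (-(mk * ‖vko mi mj mk ml QR vi vj ε‖ ^ 2) / (2 * kB * T)) *
          Real.exp (-(ml * ‖vlo mi mj mk ml QR vi vj ε‖ ^ 2) / (2 * kB * T))
          = Real.exp (QR/(kB*T)) * (Real.exp (-((mi/(2*kB*T))*‖vi‖^2)) *
              Real.exp (-((mj/(2*kB*T))*‖vj‖^2))) := by
        rw [← Real.exp_add, ← Real.exp_add, ← Real.exp_add]
        congr 1
        have h2 : -(mk * ‖vko mi mj mk ml QR vi vj ε‖ ^ 2) / (2*kB*T)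
            + -(ml * ‖vlo mi mj mk ml QR vi vj ε‖ ^ 2) / (2*kB*T)
            = -(mk * ‖vko mi mj mk ml QR vi vj ε‖ ^ 2
                + ml * ‖vlo mi mj mk ml QR vi vj ε‖ ^ 2) / (2*kB*T) := by ring
        rw [h2, hE]
        field_simp
        ring
      have hr : rmass mi mj / rmass mk ml = (mi*mj)/(mk*ml) := by
        unfold rmass
        rw [← hM]
        field_simp
      have hrpos : 0 < (mi*mj)/(mk*ml) := by positivity
      have hconst : (rmass mi mj / rmass mk ml)^2 *
          ((mk/(2*π*kB*T)) ^ ((3:ℝ)/2) * (ml/(2*π*kB*T)) ^ ((3:ℝ)/2))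
          = Real.sqrt (rmass mi mj / rmass mk ml) *
            ((mi/(2*π*kB*T)) ^ ((3:ℝ)/2) * (mj/(2*π*kB*T)) ^ ((3:ℝ)/2)) := by
        have hC : (0:ℝ) < 2*π*kB*T := by positivity
        rw [rpow32_mul hmk.le hml.le hC, rpow32_mul hmi.le hmj.le hC, hr]
        have hV : (0:ℝ) < mk*ml/((2*π*kB*T)*(2*π*kB*T)) := by positivity
        rw [rpow_ratio hrpos _ hV]
        congr 1
        rw [div_mul_div_comm]
        congr 1
        field_simp
      have hMIJ : Mi vi * Mj vj = (ci*cj) *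
          ((mi/(2*π*kB*T)) ^ ((3:ℝ)/2) * (mj/(2*π*kB*T)) ^ ((3:ℝ)/2)) *
          (Real.exp (-((mi/(2*kB*T))*‖vi‖^2)) * Real.exp (-((mj/(2*kB*T))*‖vj‖^2))) := by
        rw [hMi, hMj]
        simp only
        have hei : Real.exp (-(mi * ‖vi‖ ^ 2) / (2 * kB * T))
            = Real.exp (-((mi/(2*kB*T))*‖vi‖^2)) := by congr 1; ring
        have hej : Real.exp (-(mj * ‖vj‖ ^ 2) / (2 * kB * T))
            = Real.exp (-((mj/(2*kB*T))*‖vj‖^2)) := by congr 1; ring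
        rw [hei, hej]
        ring
      have hKL : (rmass mi mj / rmass mk ml) ^ 2 * Mk (vko mi mj mk ml QR vi vj ε) *
          Ml (vlo mi mj mk ml QR vi vj ε)
          = (Real.sqrt (rmass mi mj / rmass mk ml) * (ck*cl) * Real.exp (QR/(kB*T))) *
            ((mi/(2*π*kB*T)) ^ ((3:ℝ)/2) * (mj/(2*π*kB*T)) ^ ((3:ℝ)/2)) *
            (Real.exp (-((mi/(2*kB*T))*‖vi‖^2)) * Real.exp (-((mj/(2*kB*T))*‖vj‖^2))) := by
        rw [hMk, hMl]
        simp only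
        rw [show ∀ A B C D E F R2 : ℝ, R2 * (A * B * C) * (D * E * F)
            = (A*D) * ((R2 * (B*E)) * (C*F)) from fun _ _ _ _ _ _ _ => by ring]
        rw [hconst, hexp]
        ring
      linear_combination (σij^2 * x) * hKL - (σij^2 * x) * hMIJ
    · have hheav : heav (c0 * x - Ξij) = 0 := if_neg hh
      rw [hheav]
      ring
  · rw [if_neg hx, if_neg hx]
    ring

private lemma iGamma_one (x : ℝ) : iGamma 1 x = Real.exp (-x) := by
  unfold iGamma
  have : ∀ t : ℝ, t ^ ((1:ℝ) - 1) * Real.exp (-t) = Real.exp (-t) := by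
    intro t; rw [sub_self, Real.rpow_zero, one_mul]
  simp_rw [this]
  exact integral_exp_neg_Ioi x

private lemma iGamma_two {x : ℝ} (hx : 0 ≤ x) : iGamma 2 x = (x+1) * Real.exp (-x) := by
  unfold iGamma
  have h0 : ∀ t : ℝ, t ^ ((2:ℝ) - 1) * Real.exp (-t) = t * Real.exp (-t) := by
    intro t; norm_num
  simp_rw [h0]
  have hderiv : ∀ t ∈ Ici x, HasDerivAt (fun u : ℝ => -((u+1) * Real.exp (-u)))
      (t * Real.exp (-t)) t := by
    intro t _
    have h1 : HasDerivAt (fun u : ℝ => u + 1) 1 t := (hasDerivAt_id t).add_const 1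
    have h2 : HasDerivAt (fun u : ℝ => Real.exp (-u)) (-Real.exp (-t)) t := by
      simpa using (((hasDerivAt_id t).neg).exp)
    have := (h1.fun_mul h2).fun_neg
    exact this.congr_deriv (by ring)
  have hint : IntegrableOn (fun t : ℝ => t * Real.exp (-t)) (Ioi x) := by
    have h := Real.GammaIntegral_convergent (s := 2) (by norm_num)
    have h2 : IntegrableOn (fun t : ℝ => Real.exp (-t) * t ^ ((2:ℝ)-1)) (Ioi x) :=
      h.mono_set (Set.Ioi_subset_Ioi hx)
    apply h2.congr_fun ?_ measurableSet_Ioi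
    intro t ht
    norm_num
    ring
  have htend : Filter.Tendsto (fun u : ℝ => -((u+1) * Real.exp (-u))) Filter.atTop (nhds 0) := by
    rw [show (0:ℝ) = -0 by norm_num]
    apply Filter.Tendsto.neg
    have h1 : Filter.Tendsto (fun u : ℝ => u * Real.exp (-u)) Filter.atTop (nhds 0) := by
      simpa using Real.tendsto_pow_mul_exp_neg_atTop_nhds_zero 1
    have h2 : Filter.Tendsto (fun u : ℝ => Real.exp (-u)) Filter.atTop (nhds 0) :=
      Real.tendsto_exp_neg_atTop_nhds_zero
    have := h1.add h2
    rw [add_zero] at this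
    apply this.congr
    intro u; ring
  rw [integral_Ioi_of_hasDerivAt_of_tendsto' hderiv hint htend]
  simp

private lemma rpow32_sqrt {y : ℝ} (hy : 0 ≤ y) : y ^ ((3:ℝ)/2) = Real.sqrt y ^ 3 := by
  rw [Real.sqrt_eq_rpow, ← Real.rpow_natCast (y ^ ((1:ℝ)/2)) 3, ← Real.rpow_mul hy]
  norm_num

private lemma sqrt_merge {a b : ℝ} (ha : 0 < a) (hb : 0 < b) :
    (a/π) ^ ((3:ℝ)/2) * (b/π) ^ ((3:ℝ)/2) * Real.sqrt (π/(a+b))^3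
      = Real.sqrt (a*b/(a+b)/π)^3 := by
  have hπ := Real.pi_pos
  have hab : (0:ℝ) < a + b := by linarith
  rw [rpow32_sqrt (by positivity), rpow32_sqrt (by positivity), ← mul_pow, ← mul_pow,
    ← Real.sqrt_mul (by positivity), ← Real.sqrt_mul (by positivity)]
  congr 2
  field_simp

private lemma sqrt_arith {cc : ℝ} (hcc : 0 < cc) :
    Real.sqrt (cc/π)^3 * (4*π * ((π/cc) * (1/(2*cc)))) = 2*Real.sqrt (π*cc) * (1/cc) := by
  have hπ := Real.pi_pos
  have h1 : Real.sqrt (cc/π) = Real.sqrt cc / Real.sqrt π := Real.sqrt_div hcc.le _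
  have h2 : Real.sqrt (π*cc) = Real.sqrt π * Real.sqrt cc := Real.sqrt_mul hπ.le _
  have hsc : Real.sqrt cc ^ 2 = cc := Real.sq_sqrt hcc.le
  have hsπ : Real.sqrt π ^ 2 = π := Real.sq_sqrt hπ.le
  have hscpos : 0 < Real.sqrt cc := Real.sqrt_pos.mpr hcc
  have hsπpos : 0 < Real.sqrt π := Real.sqrt_pos.mpr hπ
  rw [h1, h2]
  set u := Real.sqrt cc
  set v := Real.sqrt π
  rw [← hsc, ← hsπ]
  field_simp
  ring


/-- Explicit reaction rate of the SRS model evaluated on centered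
Maxwellian distributions. -/
theorem srs_reaction_rate_for_maxwellians
    (mi mj mk ml : ℝ) (hmi : 0 < mi) (hmj : 0 < mj) (hmk : 0 < mk) (hml : 0 < ml)
    (hM : mi + mj = mk + ml)
    (QR : ℝ) (σij : ℝ) (hσ : 0 < σij)
    (T kB c0 : ℝ) (hT : 0 < T) (hkB : 0 < kB) (hc0 : 0 < c0)
    (Ξij : ℝ) (hΞ : 0 ≤ Ξij) (hthr : 2 * QR ≤ rmass mi mj * (Ξij / c0) ^ 2)
    (ci cj ck cl : ℝ) (hci : 0 ≤ ci) (hcj : 0 ≤ cj) (hck : 0 ≤ ck) (hcl : 0 ≤ cl)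
    (Mi Mj Mk Ml : E3 → ℝ)
    (hMi : Mi = fun v => ci * (mi / (2 * Real.pi * kB * T)) ^ ((3 : ℝ) / 2) *
      Real.exp (-(mi * ‖v‖ ^ 2) / (2 * kB * T)))
    (hMj : Mj = fun v => cj * (mj / (2 * Real.pi * kB * T)) ^ ((3 : ℝ) / 2) *
      Real.exp (-(mj * ‖v‖ ^ 2) / (2 * kB * T)))
    (hMk : Mk = fun v => ck * (mk / (2 * Real.pi * kB * T)) ^ ((3 : ℝ) / 2) *
      Real.exp (-(mk * ‖v‖ ^ 2) / (2 * kB * T)))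
    (hMl : Ml = fun v => cl * (ml / (2 * Real.pi * kB * T)) ^ ((3 : ℝ) / 2) *
      Real.exp (-(ml * ‖v‖ ^ 2) / (2 * kB * T))) :
    (∫ vi, ∫ vj, ∫ ε,
      (if 0 < ⟪ε, vi - vj⟫ then
        σij ^ 2 *
          ((rmass mi mj / rmass mk ml) ^ 2 * Mk (vko mi mj mk ml QR vi vj ε) *
              Ml (vlo mi mj mk ml QR vi vj ε) - Mi vi * Mj vj) *
          heav (c0 * ⟪ε, vi - vj⟫ - Ξij) * ⟪ε, vi - vj⟫
      else 0) ∂sphMeasure ∂volume ∂volume)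
    = σij ^ 2 * Real.sqrt (2 * Real.pi * rmass mi mj / (kB * T)) *
        (Real.sqrt (rmass mi mj / rmass mk ml) * (ck * cl) * Real.exp (QR / (kB * T))
          - ci * cj) *
        ((2 * kB * T / rmass mi mj) *
            iGamma 2 (rmass mi mj / (2 * kB * T) * (Ξij / c0) ^ 2)
          - (Ξij / c0) ^ 2 *
            iGamma 1 (rmass mi mj / (2 * kB * T) * (Ξij / c0) ^ 2)) := by
  have hM0 : (0:ℝ) < mi + mj := by linarith
  have hμ : 0 < rmass mi mj := div_pos (mul_pos hmi hmj) hM0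
  have hμkl : 0 < rmass mk ml := div_pos (mul_pos hmk hml) (by rw [← hM]; exact hM0)
  set a : ℝ := mi/(2*kB*T) with ha_def
  set b : ℝ := mj/(2*kB*T) with hb_def
  have ha : 0 < a := by rw [ha_def]; positivity
  have hb : 0 < b := by rw [hb_def]; positivity
  set K : ℝ := σij^2 * (Real.sqrt (rmass mi mj / rmass mk ml) * (ck*cl) *
      Real.exp (QR/(kB*T)) - ci*cj)
      * ((mi/(2*π*kB*T)) ^ ((3:ℝ)/2) * (mj/(2*π*kB*T)) ^ ((3:ℝ)/2)) with hK
  have hstep1 : ∀ vi vj : E3,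
      (∫ ε, (if 0 < ⟪ε, vi - vj⟫ then
        σij ^ 2 *
          ((rmass mi mj / rmass mk ml) ^ 2 * Mk (vko mi mj mk ml QR vi vj ε) *
              Ml (vlo mi mj mk ml QR vi vj ε) - Mi vi * Mj vj) *
          heav (c0 * ⟪ε, vi - vj⟫ - Ξij) * ⟪ε, vi - vj⟫
      else 0) ∂sphMeasure)
      = K * (Real.exp (-(a*‖vi‖^2)) * Real.exp (-(b*‖vj‖^2)) *
          (∫ ε, hfun c0 Ξij ⟪ε, vi - vj⟫ ∂sphMeasure)) := by
    intro vi vj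
    have h1 : (∫ ε, (if 0 < ⟪ε, vi - vj⟫ then
        σij ^ 2 *
          ((rmass mi mj / rmass mk ml) ^ 2 * Mk (vko mi mj mk ml QR vi vj ε) *
              Ml (vlo mi mj mk ml QR vi vj ε) - Mi vi * Mj vj) *
          heav (c0 * ⟪ε, vi - vj⟫ - Ξij) * ⟪ε, vi - vj⟫
      else 0) ∂sphMeasure)
        = ∫ ε, (K * (Real.exp (-(a*‖vi‖^2)) * Real.exp (-(b*‖vj‖^2)))) *
            hfun c0 Ξij ⟪ε, vi - vj⟫ ∂sphMeasure := by
      apply integral_congr_ae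
      filter_upwards [sph_ae_norm] with ε hε
      rw [kernel_rewrite mi mj mk ml hmi hmj hmk hml hM QR σij T kB c0 Ξij hT hkB hc0 hΞ hthr
        ci cj ck cl Mi Mj Mk Ml hMi hMj hMk hMl vi vj ε hε, hK]
      ring
    rw [h1, MeasureTheory.integral_const_mul]
    ring
  calc (∫ vi : E3, ∫ vj : E3, ∫ ε, (if 0 < ⟪ε, vi - vj⟫ then
        σij ^ 2 *
          ((rmass mi mj / rmass mk ml) ^ 2 * Mk (vko mi mj mk ml QR vi vj ε) *
              Ml (vlo mi mj mk ml QR vi vj ε) - Mi vi * Mj vj) *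
          heav (c0 * ⟪ε, vi - vj⟫ - Ξij) * ⟪ε, vi - vj⟫
      else 0) ∂sphMeasure ∂volume ∂volume)
      = ∫ vi : E3, ∫ vj : E3, K * (Real.exp (-(a*‖vi‖^2)) * Real.exp (-(b*‖vj‖^2)) *
          (∫ ε, hfun c0 Ξij ⟪ε, vi - vj⟫ ∂sphMeasure)) ∂volume ∂volume := by
        congr 1; funext vi; congr 1; funext vj; exact hstep1 vi vj
    _ = K * ∫ vi : E3, ∫ vj : E3, Real.exp (-(a*‖vi‖^2)) * Real.exp (-(b*‖vj‖^2)) *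
          (∫ ε, hfun c0 Ξij ⟪ε, vi - vj⟫ ∂sphMeasure) ∂volume ∂volume := by
        rw [show (fun vi : E3 => ∫ vj : E3, K * (Real.exp (-(a*‖vi‖^2)) *
            Real.exp (-(b*‖vj‖^2)) * (∫ ε, hfun c0 Ξij ⟪ε, vi - vj⟫ ∂sphMeasure)) ∂volume)
          = fun vi : E3 => K * ∫ vj : E3, Real.exp (-(a*‖vi‖^2)) * Real.exp (-(b*‖vj‖^2)) *
            (∫ ε, hfun c0 Ξij ⟪ε, vi - vj⟫ ∂sphMeasure) ∂volume
          from funext fun vi => MeasureTheory.integral_const_mul K _]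
        exact MeasureTheory.integral_const_mul K _
    _ = K * (Real.sqrt (π/(a+b))^3 * ((sphMeasure Set.univ).toReal *
        ((π/(a*b/(a+b))) * (Real.exp (-((a*b/(a+b))*(Ξij/c0)^2)) / (2*(a*b/(a+b))))))) := by
        rw [core ha hb hc0 hΞ]
    _ = σij ^ 2 * Real.sqrt (2 * Real.pi * rmass mi mj / (kB * T)) *
        (Real.sqrt (rmass mi mj / rmass mk ml) * (ck * cl) * Real.exp (QR / (kB * T))
          - ci * cj) *
        ((2 * kB * T / rmass mi mj) *
            iGamma 2 (rmass mi mj / (2 * kB * T) * (Ξij / c0) ^ 2)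
          - (Ξij / c0) ^ 2 *
            iGamma 1 (rmass mi mj / (2 * kB * T) * (Ξij / c0) ^ 2)) := by
        set cc : ℝ := rmass mi mj / (2 * kB * T) with hcc_def
        have hcc : 0 < cc := by rw [hcc_def]; positivity
        have hc_eq : a*b/(a+b) = cc := by
          rw [ha_def, hb_def, hcc_def]
          unfold rmass
          field_simp
        have hz0 : 0 ≤ cc * (Ξij/c0)^2 := by positivity
        rw [sph_univ_toReal, hc_eq, iGamma_two hz0, iGamma_one]
        set E : ℝ := Real.exp (-(cc * (Ξij/c0)^2)) with hE_def
        have hEneg : Real.exp (-(cc * (Ξij/c0)^2)) = E := rfl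
        have hEneg' : Real.exp (-(cc * (Ξij/c0)^2)) = E := rfl
        have hCi : mi/(2*π*kB*T) = a/π := by rw [ha_def, div_div]; congr 1; ring
        have hCj : mj/(2*π*kB*T) = b/π := by rw [hb_def, div_div]; congr 1; ring
        have hμcc : 2 * kB * T / rmass mi mj = 1/cc := by
          rw [hcc_def]
          field_simp
        have harg : 2 * Real.pi * rmass mi mj / (kB * T) = 4*(π*cc) := by
          rw [hcc_def]
          field_simp
          ring
        have hsqrt4 : Real.sqrt (4*(π*cc)) = 2 * Real.sqrt (π*cc) := by
          rw [show (4:ℝ)*(π*cc) = 2^2*(π*cc) by norm_num, Real.sqrt_mul (by positivity),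
            Real.sqrt_sq (by norm_num : (0:ℝ) ≤ 2)]
        rw [hK, hCi, hCj, harg, hsqrt4]
        have hmerge := sqrt_merge ha hb
        rw [hc_eq] at hmerge
        have harith := sqrt_arith hcc
        have hbr : (1/cc) * ((cc * (Ξij/c0)^2 + 1) * E) - (Ξij/c0)^2 * E = E * (1/cc) := by
          field_simp
          ring
        rw [hμcc]
        calc σij^2 * (Real.sqrt (rmass mi mj / rmass mk ml) * (ck*cl) *
              Real.exp (QR/(kB*T)) - ci*cj) * ((a/π) ^ ((3:ℝ)/2) * (b/π) ^ ((3:ℝ)/2)) *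
              (Real.sqrt (π/(a+b))^3 * (4*π * ((π/cc) * (E / (2*cc)))))
            = σij^2 * (Real.sqrt (rmass mi mj / rmass mk ml) * (ck*cl) *
              Real.exp (QR/(kB*T)) - ci*cj) * E *
              ((a/π) ^ ((3:ℝ)/2) * (b/π) ^ ((3:ℝ)/2) * Real.sqrt (π/(a+b))^3 *
                (4*π * ((π/cc) * (1/(2*cc))))) := by ring
          _ = σij^2 * (Real.sqrt (rmass mi mj / rmass mk ml) * (ck*cl) *
              Real.exp (QR/(kB*T)) - ci*cj) * E *
              (Real.sqrt (cc/π)^3 * (4*π * ((π/cc) * (1/(2*cc))))) := by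
                rw [show (a/π) ^ ((3:ℝ)/2) * (b/π) ^ ((3:ℝ)/2) * Real.sqrt (π/(a+b))^3 *
                    (4*π * ((π/cc) * (1/(2*cc))))
                  = ((a/π) ^ ((3:ℝ)/2) * (b/π) ^ ((3:ℝ)/2) * Real.sqrt (π/(a+b))^3) *
                    (4*π * ((π/cc) * (1/(2*cc)))) from by ring, hmerge]
          _ = σij^2 * (Real.sqrt (rmass mi mj / rmass mk ml) * (ck*cl) *
              Real.exp (QR/(kB*T)) - ci*cj) * E * (2*Real.sqrt (π*cc) * (1/cc)) := by
                rw [harith]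
          _ = σij^2 * (2*Real.sqrt (π*cc)) * (Real.sqrt (rmass mi mj / rmass mk ml) * (ck*cl) *
              Real.exp (QR/(kB*T)) - ci*cj) *
              ((1/cc) * ((cc * (Ξij/c0)^2 + 1) * E) - (Ξij/c0)^2 * E) := by
                rw [hbr]; ring
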